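/- arXiv:2506.07595 — 9 statements merged into one kernel-verified Lean document; each statement's English description precedes it below -/
import Mathlib

section
/- Let T be a positive integer and for each t ∈ [T] let d_t ≥ 0 be a delay with t + d_t ≤ T. Define m_t = {τ ∈ [t-1] : τ + d_τ ≥ t} (the missing observations at time t) and σ_max = max_{t ∈ [T]} |m_t|. Then for every subset S ⊆ [T], σ_max ≤ 2√2 (|S| + √(∑_{τ ∈ [T] \ S} d_τ)). In particular, σ_max ≤ 2√2 · √(∑_{t=1}^T d_t). -/
open Finset

lemma aux_sum_pos_distinct : ∀ n : ℕ, ∀ B : Finset ℕ, B.card = n →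
    (∀ b ∈ B, 1 ≤ b) → n * (n + 1) ≤ 2 * ∑ b ∈ B, b := by
  intro n
  induction n with
  | zero => intro B h _; simp
  | succ n ih =>
    intro B hcard hpos
    have hne : B.Nonempty := by
      rw [← Finset.card_pos, hcard]; omega
    set M := B.max' hne with hM
    have hMmem : M ∈ B := B.max'_mem hne
    have hsub : B ⊆ Finset.Icc 1 M := by
      intro b hb
      exact Finset.mem_Icc.mpr ⟨hpos b hb, B.le_max' b hb⟩
    have hcardle : B.card ≤ M := by
      calc B.card ≤ (Finset.Icc 1 M).card := Finset.card_le_card hsub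
        _ = M := by rw [Nat.card_Icc]; omega
    have herase : (B.erase M).card = n := by
      rw [Finset.card_erase_of_mem hMmem, hcard]
      omega
    have hih := ih (B.erase M) herase (fun b hb => hpos b (Finset.mem_of_mem_erase hb))
    have hsum : ∑ b ∈ B, b = M + ∑ b ∈ B.erase M, b :=
      (Finset.add_sum_erase B id hMmem).symm
    rw [hsum]
    have hexp : (n+1)*(n+1+1) = n*(n+1) + 2*(n+1) := by ring
    omega

theorem stmt0 (T : ℕ) (hT : 0 < T) (d : ℕ → ℕ)
    (hd : ∀ t ∈ Finset.Icc 1 T, t + d t ≤ T)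
    (m : ℕ → Finset ℕ)
    (hm : ∀ t, m t = (Finset.Ico 1 t).filter (fun τ => t ≤ τ + d τ)) :
    (∀ S ⊆ Finset.Icc 1 T,
      (((Finset.Icc 1 T).sup (fun t => (m t).card) : ℕ) : ℝ) ≤
        2 * Real.sqrt 2 *
          ((S.card : ℝ) + Real.sqrt (∑ τ ∈ Finset.Icc 1 T \ S, (d τ : ℝ)))) ∧
    (((Finset.Icc 1 T).sup (fun t => (m t).card) : ℕ) : ℝ) ≤
      2 * Real.sqrt 2 * Real.sqrt (∑ t ∈ Finset.Icc 1 T, (d t : ℝ)) := by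
  have main : ∀ S ⊆ Finset.Icc 1 T,
      (((Finset.Icc 1 T).sup (fun t => (m t).card) : ℕ) : ℝ) ≤
        2 * Real.sqrt 2 *
          ((S.card : ℝ) + Real.sqrt (∑ τ ∈ Finset.Icc 1 T \ S, (d τ : ℝ))) := by
    intro S hS
    have hne : (Finset.Icc 1 T).Nonempty := by
      refine ⟨1, Finset.mem_Icc.mpr ⟨le_refl 1, hT⟩⟩
    obtain ⟨t', ht'mem, ht'⟩ := Finset.exists_mem_eq_sup (Finset.Icc 1 T)
      hne (fun t => (m t).card)
    set σ := (Finset.Icc 1 T).sup (fun t => (m t).card) with hσ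
    set A := m t' \ S with hA
    -- each τ ∈ A : 1 ≤ τ < t', t' ≤ τ + d τ, τ ∉ S
    have hAprop : ∀ τ ∈ A, 1 ≤ τ ∧ τ < t' ∧ t' ≤ τ + d τ ∧ τ ∉ S := by
      intro τ hτ
      rw [hA, Finset.mem_sdiff, hm, Finset.mem_filter, Finset.mem_Ico] at hτ
      exact ⟨hτ.1.1.1, hτ.1.1.2, hτ.1.2, hτ.2⟩
    have ht'T : t' ≤ T := (Finset.mem_Icc.mp ht'mem).2
    have hAsub : A ⊆ Finset.Icc 1 T \ S := by
      intro τ hτ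
      obtain ⟨h1, h2, _, h4⟩ := hAprop τ hτ
      exact Finset.mem_sdiff.mpr ⟨Finset.mem_Icc.mpr ⟨h1, by omega⟩, h4⟩
    -- image of A under τ ↦ t' - τ is a set of distinct positive naturals
    have hinj : Set.InjOn (fun τ => t' - τ) A := by
      intro a ha b hb hab
      have := hAprop a ha; have := hAprop b hb
      simp only at hab
      omega
    set B := A.image (fun τ => t' - τ) with hB
    have hBcard : B.card = A.card := Finset.card_image_of_injOn hinj
    have hBpos : ∀ b ∈ B, 1 ≤ b := by
      intro b hb
      obtain ⟨τ, hτ, rfl⟩ := Finset.mem_image.mp hb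
      have := hAprop τ hτ; omega
    have hkey : A.card * (A.card + 1) ≤ 2 * ∑ b ∈ B, b :=
      hBcard ▸ aux_sum_pos_distinct B.card B rfl hBpos
    have hsumB : ∑ b ∈ B, b = ∑ τ ∈ A, (t' - τ) := Finset.sum_image hinj
    have hsumle : ∑ τ ∈ A, (t' - τ) ≤ ∑ τ ∈ A, d τ := by
      apply Finset.sum_le_sum
      intro τ hτ; have := hAprop τ hτ; omega
    have hsumle2 : ∑ τ ∈ A, d τ ≤ ∑ τ ∈ Finset.Icc 1 T \ S, d τ :=
      Finset.sum_le_sum_of_subset hAsub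
    have hD : (A.card : ℕ) * A.card ≤ 2 * ∑ τ ∈ Finset.Icc 1 T \ S, d τ := by
      nlinarith [hkey, hsumB, hsumle, hsumle2]
    -- σ ≤ A.card + S.card
    have hσle : σ ≤ A.card + S.card := by
      rw [ht']
      calc (m t').card ≤ (A ∪ S).card := by
            apply Finset.card_le_card
            intro τ hτ
            by_cases h : τ ∈ S
            · exact Finset.mem_union_right _ h
            · exact Finset.mem_union_left _ (Finset.mem_sdiff.mpr ⟨hτ, h⟩)
        _ ≤ A.card + S.card := Finset.card_union_le _ _
    -- cast to reals
    set D : ℝ := ∑ τ ∈ Finset.Icc 1 T \ S, (d τ : ℝ) with hDdef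
    have hDnonneg : 0 ≤ D := Finset.sum_nonneg (fun τ _ => Nat.cast_nonneg _)
    have hDcast : ((∑ τ ∈ Finset.Icc 1 T \ S, d τ : ℕ) : ℝ) = D := by
      rw [hDdef]; push_cast; ring
    have hAreal : (A.card : ℝ) ≤ Real.sqrt (2 * D) := by
      rw [show (2:ℝ) * D = ((2 * ∑ τ ∈ Finset.Icc 1 T \ S, d τ : ℕ) : ℝ) by
        push_cast [hDcast]; push_cast; ring]
      rw [Real.le_sqrt (Nat.cast_nonneg _) (Nat.cast_nonneg _)]
      calc (A.card : ℝ) ^ 2 = ((A.card * A.card : ℕ) : ℝ) := by push_cast; ring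
        _ ≤ _ := Nat.cast_le.mpr hD
    have hsqrt2 : Real.sqrt (2 * D) = Real.sqrt 2 * Real.sqrt D := by
      rw [Real.sqrt_mul (by norm_num)]
    have h1le : (1:ℝ) ≤ Real.sqrt 2 := by
      rw [show (1:ℝ) = Real.sqrt 1 by simp]
      exact Real.sqrt_le_sqrt (by norm_num)
    have hsqrtD : 0 ≤ Real.sqrt D := Real.sqrt_nonneg _
    have hScard : (0:ℝ) ≤ (S.card : ℝ) := Nat.cast_nonneg _
    have hσreal : (σ : ℝ) ≤ (A.card : ℝ) + (S.card : ℝ) := by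
      exact_mod_cast hσle
    rw [hsqrt2] at hAreal
    nlinarith [hAreal, hσreal, h1le, hsqrtD, hScard]
  refine ⟨main, ?_⟩
  have h := main ∅ (Finset.empty_subset _)
  simpa using h
end

section
/- Let T be a positive integer and for each t ∈ [T] let d_t ∈ ℕ. Define m_t = {τ ∈ [t-1] : τ + d_τ ≥ t}, σ_max = max_t |m_t|, and for S ⊆ [T] define σ_max^S = max_{τ ∈ [T]} |m_τ ∩ S|. Then σ_max = min_{S ⊆ [T]} (|S| + σ_max^{[T]\S}). -/
theorem stmt2 (T : ℕ) (hT : 0 < T) (d : ℕ → ℕ)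
    (m : ℕ → Finset ℕ)
    (hm : ∀ t, m t = (Finset.Ico 1 t).filter (fun τ => t ≤ τ + d τ)) :
    (Finset.Icc 1 T).sup (fun t => (m t).card) =
      (Finset.Icc 1 T).powerset.inf' (Finset.powerset_nonempty _)
        (fun S => S.card +
          (Finset.Icc 1 T).sup (fun τ => ((m τ) ∩ (Finset.Icc 1 T \ S)).card)) := by
  have hsub : ∀ t ∈ Finset.Icc 1 T, m t ⊆ Finset.Icc 1 T := by
    intro t ht τ hτ
    rw [hm t] at hτ
    simp only [Finset.mem_filter, Finset.mem_Ico] at hτ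
    simp only [Finset.mem_Icc] at ht ⊢
    exact ⟨hτ.1.1, le_trans (Nat.le_of_lt hτ.1.2) ht.2⟩
  apply le_antisymm
  · apply Finset.le_inf'
    intro S hS
    apply Finset.sup_le
    intro t ht
    have h1 : (m t).card ≤ (m t ∩ S).card + (m t ∩ (Finset.Icc 1 T \ S)).card := by
      have : m t ⊆ (m t ∩ S) ∪ (m t ∩ (Finset.Icc 1 T \ S)) := by
        intro τ hτ
        simp only [Finset.mem_union, Finset.mem_inter, Finset.mem_sdiff]
        by_cases hτS : τ ∈ S
        · exact Or.inl ⟨hτ, hτS⟩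
        · exact Or.inr ⟨hτ, hsub t ht hτ, hτS⟩
      exact le_trans (Finset.card_le_card this) (Finset.card_union_le _ _)
    refine le_trans h1 (Nat.add_le_add ?_ ?_)
    · exact Finset.card_le_card (Finset.inter_subset_right)
    · exact Finset.le_sup (f := fun τ => ((m τ) ∩ (Finset.Icc 1 T \ S)).card) ht
  · have h0 : (∅ : Finset ℕ) ∈ (Finset.Icc 1 T).powerset := by simp
    refine le_trans (Finset.inf'_le _ h0) ?_
    simp only [Finset.card_empty, Finset.sdiff_empty, zero_add]
    apply Finset.sup_le
    intro τ hτ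
    rw [Finset.inter_eq_left.mpr (hsub τ hτ)]
    exact Finset.le_sup (f := fun t => (m t).card) hτ
end

section
/- Let X ⊆ ℝⁿ be a nonempty closed convex set, A ∈ ℝ^{n×n} a positive definite symmetric matrix, b ∈ ℝⁿ, c ∈ ℝ, and ψ(x) = xᵀAx + bᵀx + c. For w₁, w₂ ∈ ℝⁿ, suppose z₁ minimizes x ↦ ⟨w₁,x⟩ + ψ(x) over X and z₂ minimizes x ↦ ⟨w₂,x⟩ + ψ(x) over X. Then ‖z₁ - z₂‖_A ≤ (1/2)‖w₁ - w₂‖_{A⁻¹}, where ‖v‖_A = √(vᵀAv). -/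
open Matrix

private lemma dot_sym {n : ℕ} {A : Matrix (Fin n) (Fin n) ℝ} (hA : A.IsHermitian)
    (x y : Fin n → ℝ) : x ⬝ᵥ A.mulVec y = y ⬝ᵥ A.mulVec x := by
  rw [Matrix.dotProduct_mulVec, ← Matrix.mulVec_transpose]
  have hAt : Aᵀ = A := by
    have := hA.eq
    rwa [Matrix.conjTranspose_eq_transpose_of_trivial] at this
  rw [hAt, dotProduct_comm]

private lemma dot_nonneg {n : ℕ} {A : Matrix (Fin n) (Fin n) ℝ} (hA : A.PosDef)
    (x : Fin n → ℝ) : 0 ≤ x ⬝ᵥ A.mulVec x := by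
  have := hA.posSemidef.dotProduct_mulVec_nonneg x
  simpa using this

private lemma cs {n : ℕ} {A : Matrix (Fin n) (Fin n) ℝ} (hA : A.PosDef)
    (x y : Fin n → ℝ) :
    (x ⬝ᵥ A.mulVec y) ^ 2 ≤ (x ⬝ᵥ A.mulVec x) * (y ⬝ᵥ A.mulVec y) := by
  rcases eq_or_ne y 0 with rfl | hy
  · simp [Matrix.mulVec_zero]
  · have hq : 0 < y ⬝ᵥ A.mulVec y := by
      have := hA.dotProduct_mulVec_pos hy; simpa using this
    set q := y ⬝ᵥ A.mulVec y with hqdef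
    set r := x ⬝ᵥ A.mulVec y with hrdef
    have key : 0 ≤ (x - (r / q) • y) ⬝ᵥ A.mulVec (x - (r / q) • y) := dot_nonneg hA _
    have hsym : y ⬝ᵥ A.mulVec x = r := dot_sym hA.isHermitian y x
    have expand : (x - (r / q) • y) ⬝ᵥ A.mulVec (x - (r / q) • y)
        = x ⬝ᵥ A.mulVec x - 2 * (r / q) * r + (r / q) ^ 2 * q := by
      simp only [Matrix.mulVec_sub, Matrix.mulVec_smul, dotProduct_sub,
        sub_dotProduct, dotProduct_smul, smul_dotProduct,
        smul_eq_mul, hsym, ← hrdef, ← hqdef]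
      ring
    rw [expand] at key
    have h2 : 2 * (r / q) * r - (r / q) ^ 2 * q = r ^ 2 / q := by
      field_simp; ring
    have : r ^ 2 / q ≤ x ⬝ᵥ A.mulVec x := by linarith [key, h2.symm.le]
    calc r ^ 2 = (r ^ 2 / q) * q := by field_simp
    _ ≤ (x ⬝ᵥ A.mulVec x) * q := by
        exact mul_le_mul_of_nonneg_right this hq.le

private lemma limit_step {g C : ℝ} (hC : 0 ≤ C)
    (h : ∀ l : ℝ, 0 < l → l ≤ 1 → 0 ≤ g + l * C) : 0 ≤ g := by
  by_contra hg
  push_neg at hg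
  have hC1 : (0:ℝ) < C + 1 := by linarith
  set l : ℝ := min 1 ((-g) / (C + 1)) with hl
  have hlpos : 0 < l := lt_min one_pos (div_pos (by linarith) hC1)
  have hl1 : l ≤ 1 := min_le_left _ _
  have hl2 : l ≤ (-g) / (C + 1) := min_le_right _ _
  have hl3 : l * (C + 1) ≤ -g := by
    rw [← le_div_iff₀ hC1] at *
    exact hl2
  have := h l hlpos hl1
  nlinarith

theorem stmt5 {n : ℕ} (X : Set (Fin n → ℝ)) (hXne : X.Nonempty) (hXc : IsClosed X)
    (hXconv : Convex ℝ X)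
    (A : Matrix (Fin n) (Fin n) ℝ) (hA : A.PosDef)
    (b : Fin n → ℝ) (c : ℝ) (w₁ w₂ z₁ z₂ : Fin n → ℝ)
    (ψ : (Fin n → ℝ) → ℝ)
    (hψ : ∀ x, ψ x = x ⬝ᵥ A.mulVec x + b ⬝ᵥ x + c)
    (hz₁mem : z₁ ∈ X) (hz₁ : ∀ x ∈ X, w₁ ⬝ᵥ z₁ + ψ z₁ ≤ w₁ ⬝ᵥ x + ψ x)
    (hz₂mem : z₂ ∈ X) (hz₂ : ∀ x ∈ X, w₂ ⬝ᵥ z₂ + ψ z₂ ≤ w₂ ⬝ᵥ x + ψ x) :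
    Real.sqrt ((z₁ - z₂) ⬝ᵥ A.mulVec (z₁ - z₂)) ≤
      (1 / 2) * Real.sqrt ((w₁ - w₂) ⬝ᵥ A⁻¹.mulVec (w₁ - w₂)) := by
  -- First-order optimality: for a minimizer z with gradient direction to other point
  have grad_ineq : ∀ (w z z' : Fin n → ℝ), z ∈ X → z' ∈ X →
      (∀ x ∈ X, w ⬝ᵥ z + ψ z ≤ w ⬝ᵥ x + ψ x) →
      0 ≤ w ⬝ᵥ (z' - z) + 2 * (z ⬝ᵥ A.mulVec (z' - z)) + b ⬝ᵥ (z' - z) := by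
    intro w z z' hz hz' hopt
    set e := z' - z with he
    have hCpos : 0 ≤ e ⬝ᵥ A.mulVec e := dot_nonneg hA e
    refine limit_step hCpos ?_
    intro l hl0 hl1
    have hmem : z + l • e ∈ X := by
      have : z + l • e = (1 - l) • z + l • z' := by
        rw [he]; module
      rw [this]
      exact hXconv hz hz' (by linarith) hl0.le (by ring)
    have hval := hopt _ hmem
    rw [hψ, hψ] at hval
    have hsym : e ⬝ᵥ A.mulVec z = z ⬝ᵥ A.mulVec e := dot_sym hA.isHermitian e z
    have hexp : w ⬝ᵥ (z + l • e) + ((z + l • e) ⬝ᵥ A.mulVec (z + l • e) + b ⬝ᵥ (z + l • e) + c)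
        = (w ⬝ᵥ z + (z ⬝ᵥ A.mulVec z + b ⬝ᵥ z + c))
          + l * (w ⬝ᵥ e + 2 * (z ⬝ᵥ A.mulVec e) + b ⬝ᵥ e)
          + l ^ 2 * (e ⬝ᵥ A.mulVec e) := by
      simp only [Matrix.mulVec_add, Matrix.mulVec_smul, dotProduct_add,
        add_dotProduct, dotProduct_smul, smul_dotProduct,
        smul_eq_mul, hsym]
      ring
    rw [hexp] at hval
    have h0 : 0 ≤ l * (w ⬝ᵥ e + 2 * (z ⬝ᵥ A.mulVec e) + b ⬝ᵥ e) + l ^ 2 * (e ⬝ᵥ A.mulVec e) := by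
      linarith
    nlinarith [h0, hl0]
  have h1 := grad_ineq w₁ z₁ z₂ hz₁mem hz₂mem hz₁
  have h2 := grad_ineq w₂ z₂ z₁ hz₂mem hz₁mem hz₂
  set d := z₁ - z₂ with hd
  set u := w₁ - w₂ with hu
  -- combine : 2 dAd ≤ - u⬝d
  have hz21 : z₂ - z₁ = -d := by rw [hd]; abel
  have key : 2 * (d ⬝ᵥ A.mulVec d) ≤ -(u ⬝ᵥ d) := by
    rw [hz21] at h1
    have e1 : w₁ ⬝ᵥ (-d) = -(w₁ ⬝ᵥ d) := by simp
    have e2 : z₁ ⬝ᵥ A.mulVec (-d) = -(z₁ ⬝ᵥ A.mulVec d) := by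
      simp [Matrix.mulVec_neg]
    have e3 : b ⬝ᵥ (-d) = -(b ⬝ᵥ d) := by simp
    have hsym12 : z₂ ⬝ᵥ A.mulVec d = d ⬝ᵥ A.mulVec z₂ := dot_sym hA.isHermitian z₂ d
    have hdz : z₁ ⬝ᵥ A.mulVec d - z₂ ⬝ᵥ A.mulVec d = d ⬝ᵥ A.mulVec d := by
      have : z₁ ⬝ᵥ A.mulVec d - z₂ ⬝ᵥ A.mulVec d = (z₁ - z₂) ⬝ᵥ A.mulVec d := by
        simp [sub_dotProduct]
      rw [this, ← hd]
    have hud : u ⬝ᵥ d = w₁ ⬝ᵥ d - w₂ ⬝ᵥ d := by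
      rw [hu]; simp [sub_dotProduct]
    rw [e1, e2, e3] at h1
    linarith [h1, h2, hdz, hud.symm.le, hud.le]
  -- Cauchy-Schwarz via v = A⁻¹ u
  have hAinv : A⁻¹.PosDef := hA.inv
  set v := A⁻¹.mulVec u with hv
  have hAv : A.mulVec v = u := by
    rw [hv, Matrix.mulVec_mulVec, Matrix.mul_nonsing_inv A hA.det_pos.ne'.isUnit,
      Matrix.one_mulVec]
  have hvAv : v ⬝ᵥ A.mulVec v = u ⬝ᵥ A⁻¹.mulVec u := by
    rw [hAv, ← hv, dotProduct_comm]
  have hvAd : v ⬝ᵥ A.mulVec d = u ⬝ᵥ d := by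
    rw [dot_sym hA.isHermitian v d, hAv, dotProduct_comm]
  have hcs := cs hA v d
  rw [hvAd, hvAv] at hcs
  set P := d ⬝ᵥ A.mulVec d with hP
  set Q := u ⬝ᵥ A⁻¹.mulVec u with hQ
  have hPnn : 0 ≤ P := dot_nonneg hA d
  have hQnn : 0 ≤ Q := dot_nonneg hAinv u
  -- (u⬝d)^2 ≤ Q * P and 2P ≤ -(u⬝d) gives 4P^2 ≤ QP
  have h4P : 4 * P ^ 2 ≤ Q * P := by nlinarith [key, hcs, hPnn]
  have sqrtP : Real.sqrt P ^ 2 = P := Real.sq_sqrt hPnn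
  have sqrtQ : Real.sqrt Q ^ 2 = Q := Real.sq_sqrt hQnn
  have hsP : 0 ≤ Real.sqrt P := Real.sqrt_nonneg P
  have hsQ : 0 ≤ Real.sqrt Q := Real.sqrt_nonneg Q
  rcases eq_or_lt_of_le hPnn with hP0 | hPpos
  · rw [← hP0, Real.sqrt_zero]
    positivity
  · have h4 : 4 * P ≤ Q := by
      have := mul_le_mul_of_nonneg_right h4P (le_of_lt (inv_pos.mpr hPpos))
      calc 4 * P = 4 * P ^ 2 * P⁻¹ := by field_simp
      _ ≤ Q * P * P⁻¹ := this
      _ = Q := by field_simp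
    nlinarith [sqrtP, sqrtQ, hsP, hsQ, h4, sq_nonneg (2 * Real.sqrt P - Real.sqrt Q)]
end

section
/- Let X ⊆ ℝⁿ be a nonempty closed convex set, A₁, A₂ positive semidefinite symmetric matrices, and let ψᵢ(x) = xᵀAᵢx + bᵢᵀx + cᵢ for i = 1,2. Suppose z₁ ∈ argmin_{x∈X}(⟨w₁,x⟩ + ψ₁(x)) and z₂ ∈ argmin_{x∈X}(⟨w₂,x⟩ + ψ₂(x)). Then ‖z₁ - z₂‖²_{A₁} + ‖z₁ - z₂‖²_{A₂} ≤ ⟨w₁ - w₂, z₂ - z₁⟩ + (ψ₁(z₂) - ψ₂(z₂)) - (ψ₁(z₁) - ψ₂(z₁)). -/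
open Matrix

private lemma quad_min_key {n : ℕ} (X : Set (Fin n → ℝ)) (hXconv : Convex ℝ X)
    (A : Matrix (Fin n) (Fin n) ℝ) (hA : A.PosSemidef) (b w z y : Fin n → ℝ)
    (hz : z ∈ X) (hy : y ∈ X)
    (hmin : ∀ x ∈ X, w ⬝ᵥ z + (z ⬝ᵥ A.mulVec z + b ⬝ᵥ z) ≤
      w ⬝ᵥ x + (x ⬝ᵥ A.mulVec x + b ⬝ᵥ x)) :
    (y - z) ⬝ᵥ A.mulVec (y - z) ≤
      (w ⬝ᵥ y + (y ⬝ᵥ A.mulVec y + b ⬝ᵥ y)) - (w ⬝ᵥ z + (z ⬝ᵥ A.mulVec z + b ⬝ᵥ z)) := by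
  set d : Fin n → ℝ := y - z with hd
  set Q : ℝ := d ⬝ᵥ A.mulVec d with hQ
  set L : ℝ := w ⬝ᵥ d + (z ⬝ᵥ A.mulVec d + d ⬝ᵥ A.mulVec z + b ⬝ᵥ d) with hL
  have hexp : ∀ t : ℝ, w ⬝ᵥ (z + t • d) + ((z + t • d) ⬝ᵥ A.mulVec (z + t • d) + b ⬝ᵥ (z + t • d))
      = (w ⬝ᵥ z + (z ⬝ᵥ A.mulVec z + b ⬝ᵥ z)) + t * L + t ^ 2 * Q := by
    intro t
    simp only [hL, hQ, mulVec_add, mulVec_smul, dotProduct_add, add_dotProduct,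
      smul_dotProduct, dotProduct_smul, smul_eq_mul]
    ring
  have hmem : ∀ t : ℝ, t ∈ Set.Icc (0:ℝ) 1 → z + t • d ∈ X := by
    intro t ht
    have := hXconv hz hy (by linarith [ht.1, ht.2] : (0:ℝ) ≤ 1 - t) ht.1 (by ring)
    convert this using 1
    simp [hd]
    module
  have hQnn : 0 ≤ Q := by have := hA.dotProduct_mulVec_nonneg d; rwa [star_trivial] at this
  have htQ : ∀ t : ℝ, 0 < t → t ≤ 1 → 0 ≤ t * L + t ^ 2 * Q := by
    intro t ht0 ht1
    have := hmin (z + t • d) (hmem t ⟨le_of_lt ht0, ht1⟩)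
    rw [hexp t] at this
    linarith
  have hLnn : 0 ≤ L := by
    by_contra h
    push_neg at h
    set t : ℝ := min 1 ((-L) / (2 * (Q + 1))) with hts
    have hQ1 : 0 < Q + 1 := by linarith
    have ht0 : 0 < t := lt_min one_pos (div_pos (by linarith) (by positivity))
    have ht1 : t ≤ 1 := min_le_left _ _
    have h2 : t ≤ (-L) / (2 * (Q + 1)) := min_le_right _ _
    have h3 : t * Q ≤ -L / 2 := by
      have : t * Q ≤ ((-L) / (2 * (Q + 1))) * Q :=
        mul_le_mul_of_nonneg_right h2 hQnn
      have h4 : ((-L) / (2 * (Q + 1))) * Q ≤ -L / 2 := by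
        rw [div_mul_eq_mul_div, div_le_div_iff₀ (by positivity) (by norm_num)]
        nlinarith
      linarith
    have := htQ t ht0 ht1
    nlinarith [sq_nonneg t, mul_pos ht0 ht0]
  have hfy : w ⬝ᵥ y + (y ⬝ᵥ A.mulVec y + b ⬝ᵥ y)
      = (w ⬝ᵥ z + (z ⬝ᵥ A.mulVec z + b ⬝ᵥ z)) + 1 * L + 1 ^ 2 * Q := by
    have h1 := hexp 1
    rw [show z + (1:ℝ) • d = y by simp [hd]] at h1
    exact h1
  rw [hfy]
  linarith

theorem stmt6 {n : ℕ} (X : Set (Fin n → ℝ)) (hXne : X.Nonempty) (hXc : IsClosed X)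
    (hXconv : Convex ℝ X)
    (A₁ A₂ : Matrix (Fin n) (Fin n) ℝ) (hA₁ : A₁.PosSemidef) (hA₂ : A₂.PosSemidef)
    (b₁ b₂ : Fin n → ℝ) (c₁ c₂ : ℝ) (w₁ w₂ z₁ z₂ : Fin n → ℝ)
    (ψ₁ ψ₂ : (Fin n → ℝ) → ℝ)
    (hψ₁ : ∀ x, ψ₁ x = x ⬝ᵥ A₁.mulVec x + b₁ ⬝ᵥ x + c₁)
    (hψ₂ : ∀ x, ψ₂ x = x ⬝ᵥ A₂.mulVec x + b₂ ⬝ᵥ x + c₂)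
    (hz₁mem : z₁ ∈ X) (hz₁ : ∀ x ∈ X, w₁ ⬝ᵥ z₁ + ψ₁ z₁ ≤ w₁ ⬝ᵥ x + ψ₁ x)
    (hz₂mem : z₂ ∈ X) (hz₂ : ∀ x ∈ X, w₂ ⬝ᵥ z₂ + ψ₂ z₂ ≤ w₂ ⬝ᵥ x + ψ₂ x) :
    (z₁ - z₂) ⬝ᵥ A₁.mulVec (z₁ - z₂) + (z₁ - z₂) ⬝ᵥ A₂.mulVec (z₁ - z₂) ≤
      (w₁ - w₂) ⬝ᵥ (z₂ - z₁) + (ψ₁ z₂ - ψ₂ z₂) - (ψ₁ z₁ - ψ₂ z₁) := by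
  have key₁ := quad_min_key X hXconv A₁ hA₁ b₁ w₁ z₁ z₂ hz₁mem hz₂mem (by
    intro x hx
    have := hz₁ x hx
    simp only [hψ₁] at this
    linarith)
  have key₂ := quad_min_key X hXconv A₂ hA₂ b₂ w₂ z₂ z₁ hz₂mem hz₁mem (by
    intro x hx
    have := hz₂ x hx
    simp only [hψ₂] at this
    linarith)
  have hsym₁ : (z₁ - z₂) ⬝ᵥ A₁.mulVec (z₁ - z₂) = (z₂ - z₁) ⬝ᵥ A₁.mulVec (z₂ - z₁) := by
    have : (z₁ - z₂ : Fin n → ℝ) = -(z₂ - z₁) := by abel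
    rw [this]
    simp [mulVec_neg, dotProduct_neg, neg_dotProduct, mulVec_sub, dotProduct_sub, sub_dotProduct]
    ring
  have hdot : (w₁ - w₂) ⬝ᵥ (z₂ - z₁) = w₁ ⬝ᵥ z₂ - w₁ ⬝ᵥ z₁ - w₂ ⬝ᵥ z₂ + w₂ ⬝ᵥ z₁ := by
    simp [sub_dotProduct, dotProduct_sub]
    ring
  simp only [hψ₁, hψ₂]
  rw [hsym₁]
  linarith
end

section
/- Let f : X → ℝ be an α-exp-concave differentiable function on a convex set X ⊆ ℝⁿ, with ‖∇f(y)‖₂ ≤ G for all y ∈ X and diameter of X at most D. Set β = (1/2)·min{1/(4GD), α}. Then for all x, y ∈ X, f(x) ≥ f(y) + ⟨∇f(y), x - y⟩ + (β/2)(⟨∇f(y), x - y⟩)². -/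
open RealInnerProductSpace Set

-- exp t ≥ (1+t/2)^2 for t ≥ -2
lemma exp_ge_sq' (t : ℝ) (ht : -2 ≤ t) : (1 + t/2)^2 ≤ Real.exp t := by
  have h := Real.add_one_le_exp (t/2)
  have h0 : (0:ℝ) ≤ 1 + t/2 := by linarith
  have : Real.exp t = (Real.exp (t/2))^2 := by
    rw [← Real.exp_nat_mul]; norm_num; ring
  rw [this]
  have := pow_le_pow_left₀ h0 (by linarith : 1 + t/2 ≤ Real.exp (t/2)) 2
  linarith [this]

lemma exp_ge_cube' (t : ℝ) (ht : 0 ≤ t) : (1 + t/3)^3 ≤ Real.exp t := by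
  have h := Real.add_one_le_exp (t/3)
  have h0 : (0:ℝ) ≤ 1 + t/3 := by linarith
  have : Real.exp t = (Real.exp (t/3))^3 := by
    rw [← Real.exp_nat_mul]; norm_num; ring
  rw [this]
  exact pow_le_pow_left₀ h0 (by linarith) 3

lemma core_ineq (u v : ℝ) (hv0 : 0 ≤ v) (hv : v ≤ 1/4) (hvu : v * |u| ≤ 1/16) :
    1 - u ≤ Real.exp (-u - v * u^2) := by
  rcases le_or_gt u 0 with hu | hu
  · have habs : |u| = -u := abs_of_nonpos hu
    rw [habs] at hvu
    have hvu2 : v * u^2 ≤ (1/16) * (-u) := by nlinarith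
    have ht0 : 0 ≤ -u - v * u^2 := by nlinarith
    have h1 := exp_ge_cube' (-u - v*u^2) ht0
    have ht15 : -u - v*u^2 ≥ (15/16) * (-u) := by nlinarith
    have hvsq : v * u^2 ≤ u^2/4 := by nlinarith [sq_nonneg u]
    nlinarith [pow_nonneg ht0 3, sq_nonneg u, sq_nonneg (-u - v*u^2)]
  · rcases le_or_gt 1 u with h1u | h1u
    · have := Real.exp_pos (-u - v * u^2)
      linarith
    · have habs : |u| = u := abs_of_pos hu
      rw [habs] at hvu
      have hvu2 : v * u^2 ≤ (1/16) * u := by nlinarith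
      have h2 := exp_ge_sq' (-u - v*u^2) (by nlinarith)
      have : (1 + (-u - v*u^2)/2)^2 ≥ 1 - u := by nlinarith [sq_nonneg u, sq_nonneg (v*u^2)]
      linarith

-- first order condition for concave functions
lemma concave_first_order {E : Type*} [NormedAddCommGroup E] [InnerProductSpace ℝ E] [CompleteSpace E]
    {X : Set E} {h : E → ℝ} (hc : ConcaveOn ℝ X h) {g x y : E}
    (hx : x ∈ X) (hy : y ∈ X) (hg : HasGradientAt h g y) :
    h x ≤ h y + ⟪g, x - y⟫ := by
  rcases eq_or_ne x y with rfl | hxy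
  · simp
  · set γ : ℝ →ᵃ[ℝ] E := AffineMap.lineMap y x with hγdef
    have hmem : Icc (0:ℝ) 1 ⊆ γ ⁻¹' X := by
      intro t ht
      exact hc.1.lineMap_mem hy hx ht
    have hconc : ConcaveOn ℝ (Icc (0:ℝ) 1) (h ∘ γ) :=
      (hc.comp_affineMap γ).subset hmem (convex_Icc 0 1)
    have hγ' : HasDerivAt (fun t : ℝ => γ t) (x - y) 0 := by
      have : (fun t : ℝ => γ t) = fun t : ℝ => t • (x - y) + y := by
        funext t; simp [hγdef, AffineMap.lineMap_apply]
      rw [this]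
      simpa using ((hasDerivAt_id (0:ℝ)).smul_const (x - y)).add_const y
    have hd : HasDerivAt (h ∘ γ) ⟪g, x - y⟫ 0 := by
      have hF := hg.hasFDerivAt
      have hγ0 : γ (0:ℝ) = y := by simp [hγdef]
      have := hF.comp_hasDerivAt_of_eq 0 hγ' hγ0.symm
      simpa [InnerProductSpace.toDual_apply_apply] using this
    have hslope := hconc.slope_le_of_hasDerivAt (by norm_num : (0:ℝ) ∈ Icc (0:ℝ) 1)
      (by norm_num : (1:ℝ) ∈ Icc (0:ℝ) 1) one_pos hd
    have hγ1 : γ (1:ℝ) = x := by simp [hγdef]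
    have hγ0 : γ (0:ℝ) = y := by simp [hγdef]
    rw [slope_def_field] at hslope
    simp [Function.comp, hγ1, hγ0] at hslope
    linarith

-- chain rule for gradient of exp(c * f)
lemma hasGradientAt_exp_mul {E : Type*} [NormedAddCommGroup E] [InnerProductSpace ℝ E]
    [CompleteSpace E] (f : E → ℝ) (g y : E) (c : ℝ) (hf : HasGradientAt f g y) :
    HasGradientAt (fun x => Real.exp (c * f x)) ((c * Real.exp (c * f y)) • g) y := by
  have hF : HasFDerivAt f (InnerProductSpace.toDual ℝ E g) y := hf.hasFDerivAt
  have hexp : HasDerivAt (fun t : ℝ => Real.exp (c * t)) (Real.exp (c * f y) * c) (f y) := by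
    have h1 := ((Real.hasDerivAt_exp (c * f y)).comp (f y)
      ((hasDerivAt_id (f y)).const_mul c))
    simp at h1; exact h1
  have hcomp := hexp.comp_hasFDerivAt y hF
  rw [hasGradientAt_iff_hasFDerivAt]
  have heq : (InnerProductSpace.toDual ℝ E) ((c * Real.exp (c * f y)) • g)
      = (Real.exp (c * f y) * c) • (InnerProductSpace.toDual ℝ E) g := by
    ext w
    simp only [InnerProductSpace.toDual_apply_apply, ContinuousLinearMap.coe_smul', Pi.smul_apply,
      real_inner_smul_left, smul_eq_mul]
    ring
  rw [heq]
  exact hcomp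


open RealInnerProductSpace

theorem stmt8 {n : ℕ} (X : Set (EuclideanSpace ℝ (Fin n))) (hX : Convex ℝ X)
    (f : EuclideanSpace ℝ (Fin n) → ℝ)
    (f' : EuclideanSpace ℝ (Fin n) → EuclideanSpace ℝ (Fin n))
    (hdiff : ∀ y ∈ X, HasGradientAt f (f' y) y)
    (α G D : ℝ) (hα : 0 < α)
    (hexp : ConcaveOn ℝ X (fun x => Real.exp (-α * f x)))
    (hG : ∀ y ∈ X, ‖f' y‖ ≤ G)
    (hD : ∀ x ∈ X, ∀ y ∈ X, ‖x - y‖ ≤ D)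
    (β : ℝ) (hβ : β = (1 / 2) * min (1 / (4 * G * D)) α) :
    ∀ x ∈ X, ∀ y ∈ X,
      f x ≥ f y + ⟪f' y, x - y⟫ + β / 2 * (⟪f' y, x - y⟫) ^ 2 := by
  intro x hx y hy
  set z := ⟪f' y, x - y⟫ with hz
  have hGnn : 0 ≤ G := le_trans (norm_nonneg _) (hG y hy)
  have hDnn : 0 ≤ D := le_trans (norm_nonneg _) (hD x hx y hy)
  have hzb : |z| ≤ G * D := by
    calc |z| ≤ ‖f' y‖ * ‖x - y‖ := abs_real_inner_le_norm _ _
    _ ≤ G * D := mul_le_mul (hG y hy) (hD x hx y hy) (norm_nonneg _) hGnn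
  have hinv : 0 ≤ 1 / (4 * G * D) := by positivity
  have hβnn : 0 ≤ β := by
    rw [hβ]
    have := le_min hinv hα.le
    linarith
  have hβα : 2 * β ≤ α := by
    rw [hβ]
    have := min_le_right (1 / (4 * G * D)) α
    linarith
  have hβz : β * |z| ≤ 1 / 8 := by
    rcases (mul_nonneg hGnn hDnn).lt_or_eq with hpos | h0
    · have hG0 : G ≠ 0 := by rintro rfl; simp at hpos
      have hD0 : D ≠ 0 := by rintro rfl; simp at hpos
      have hβle : β ≤ 1 / (8 * (G * D)) := by
        rw [hβ]
        have h1 := min_le_left (1 / (4 * G * D)) α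
        have : (1:ℝ)/2 * (1 / (4 * G * D)) = 1 / (8 * (G * D)) := by
          field_simp; ring
        nlinarith
      calc β * |z| ≤ (1 / (8 * (G * D))) * (G * D) :=
            mul_le_mul hβle hzb (abs_nonneg _) (by positivity)
      _ = 1 / 8 := by field_simp
    · have hz0 : |z| = 0 := le_antisymm (by rw [← h0] at hzb; exact hzb) (abs_nonneg _)
      rw [hz0, mul_zero]; norm_num
  have hgrad := hasGradientAt_exp_mul f (f' y) y (-α) (hdiff y hy)
  have hfo := concave_first_order hexp hx hy hgrad
  rw [real_inner_smul_left, ← hz] at hfo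
  have hv4 : β / (2 * α) ≤ 1 / 4 := by
    rw [div_le_iff₀ (by positivity)]
    linarith
  have hvu : β / (2 * α) * |α * z| ≤ 1 / 16 := by
    rw [abs_mul, abs_of_pos hα]
    have : β / (2 * α) * (α * |z|) = β * |z| / 2 := by field_simp
    rw [this]
    linarith
  have hcore := core_ineq (α * z) (β / (2 * α)) (by positivity) hv4 hvu
  have hexpineq : Real.exp (-α * f x) ≤ Real.exp (-α * (f y + z + β / 2 * z ^ 2)) := by
    have e1 : Real.exp (-α * (f y + z + β / 2 * z ^ 2))
        = Real.exp (-α * f y) * Real.exp (-(α * z) - β / (2 * α) * (α * z) ^ 2) := by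
      rw [← Real.exp_add]
      congr 1
      field_simp
      ring
    rw [e1]
    calc Real.exp (-α * f x) ≤ Real.exp (-α * f y) + -α * Real.exp (-α * f y) * z := hfo
    _ = Real.exp (-α * f y) * (1 - α * z) := by ring
    _ ≤ Real.exp (-α * f y) * Real.exp (-(α * z) - β / (2 * α) * (α * z) ^ 2) :=
        mul_le_mul_of_nonneg_left hcore (Real.exp_pos _).le
  have hle := Real.exp_le_exp.mp hexpineq
  rw [neg_mul, neg_mul, neg_le_neg_iff] at hle
  have := (mul_le_mul_iff_right₀ hα).mp hle
  linarith
end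

section
/- Let φ > 0, L > 0, and 0 < η₀ ≤ η₁ ≤ ... ≤ η_N. For t ∈ [N] let a_t ∈ ℝⁿ with ‖a_t‖₂ ≤ L, and define A_t = η_t I + φ ∑_{τ≤t} a_τ a_τᵀ. Let (d_t) be delays with m_t = {τ < t : τ + d_τ ≥ t} and d_max^{≤N} = max_{τ ≤ N} min{d_τ, N - τ}. Then ∑_{t=1}^N ‖a_t‖_{A_t⁻¹} (∑_{τ∈m_t} ‖a_τ‖_{A_t⁻¹}) ≤ (2n·d_max^{≤N}/φ)·ln(1 + φL²N/(η₀n)). -/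
open Matrix

section Helpers

variable {n : ℕ}

lemma vmv_mulVec (a x : Fin n → ℝ) :
    (vecMulVec a a) *ᵥ x = (a ⬝ᵥ x) • a := by
  ext i
  simp only [vecMulVec_apply, mulVec, dotProduct, Pi.smul_apply, smul_eq_mul, Finset.sum_mul]
  exact Finset.sum_congr rfl fun j _ => by ring

lemma vmv_psd (a : Fin n → ℝ) : (vecMulVec a a).PosSemidef := by
  refine PosSemidef.of_dotProduct_mulVec_nonneg ?_ ?_
  · ext i j
    simp [conjTranspose_apply, vecMulVec_apply, mul_comm]
  · intro x
    rw [vmv_mulVec]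
    simp only [star_trivial, dotProduct_smul]
    simp only [smul_eq_mul, dotProduct_comm x a]
    exact mul_self_nonneg _

lemma sum_vmv_psd (a : ℕ → Fin n → ℝ) (s : Finset ℕ) :
    (∑ τ ∈ s, vecMulVec (a τ) (a τ)).PosSemidef := by
  classical
  induction s using Finset.induction with
  | empty => simpa using Matrix.PosSemidef.zero
  | insert _ _ h ih => rw [Finset.sum_insert h]; exact Matrix.PosSemidef.add (vmv_psd _) ih

lemma smul_psd {c : ℝ} (hc : 0 ≤ c) {M : Matrix (Fin n) (Fin n) ℝ}
    (hM : M.PosSemidef) : (c • M).PosSemidef := by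
  refine PosSemidef.of_dotProduct_mulVec_nonneg ?_ ?_
  · show _ = _
    rw [conjTranspose_smul, hM.1.eq]
    simp
  · intro x
    rw [smul_mulVec, dotProduct_smul]
    exact mul_nonneg hc (hM.dotProduct_mulVec_nonneg x)

lemma smul_one_posdef {c : ℝ} (hc : 0 < c) :
    (c • (1 : Matrix (Fin n) (Fin n) ℝ)).PosDef := by
  refine PosDef.of_dotProduct_mulVec_pos ?_ ?_
  · show _ = _
    rw [conjTranspose_smul, Matrix.PosSemidef.one.1.eq]
    simp
  · intro x hx
    rw [smul_mulVec, dotProduct_smul, one_mulVec]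
    exact mul_pos hc (by
      have := Matrix.dotProduct_star_self_pos_iff (v := x) |>.2 hx
      simpa using this)

lemma mul_inv_cancel_vec {A : Matrix (Fin n) (Fin n) ℝ} (hA : A.PosDef) (x : Fin n → ℝ) :
    A *ᵥ (A⁻¹ *ᵥ x) = x := by
  rw [mulVec_mulVec, Matrix.mul_nonsing_inv A (isUnit_iff_ne_zero.2 hA.det_pos.ne'), one_mulVec]

lemma dot_symm_mulVec {A : Matrix (Fin n) (Fin n) ℝ} (hA : A.IsHermitian)
    (u v : Fin n → ℝ) : u ⬝ᵥ (A *ᵥ v) = (A *ᵥ u) ⬝ᵥ v := by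
  rw [Matrix.dotProduct_mulVec, ← Matrix.mulVec_transpose]
  congr 1
  have := hA.eq
  rw [conjTranspose] at this
  simpa using congrArg Matrix.transpose this.symm ▸ rfl

lemma quad_inv_anti {A B : Matrix (Fin n) (Fin n) ℝ} (hA : A.PosDef) (hB : B.PosDef)
    (hAB : (B - A).PosSemidef) (x : Fin n → ℝ) :
    x ⬝ᵥ (B⁻¹ *ᵥ x) ≤ x ⬝ᵥ (A⁻¹ *ᵥ x) := by
  set u := A⁻¹ *ᵥ x with hu
  set v := B⁻¹ *ᵥ x with hv
  have hAu : A *ᵥ u = x := mul_inv_cancel_vec hA x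
  have hBv : B *ᵥ v = x := mul_inv_cancel_vec hB x
  have h1 : 0 ≤ (u - v) ⬝ᵥ (A *ᵥ (u - v)) := by simpa using hA.posSemidef.dotProduct_mulVec_nonneg (u - v)
  have h2 : v ⬝ᵥ (A *ᵥ v) ≤ v ⬝ᵥ (B *ᵥ v) := by
    have := hAB.dotProduct_mulVec_nonneg v
    simp only [star_trivial, sub_mulVec, dotProduct_sub] at this
    linarith
  have hexp : (u - v) ⬝ᵥ (A *ᵥ (u - v))
      = u ⬝ᵥ (A *ᵥ u) - 2 * (v ⬝ᵥ (A *ᵥ u)) + v ⬝ᵥ (A *ᵥ v) := by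
    have hsym : u ⬝ᵥ (A *ᵥ v) = v ⬝ᵥ (A *ᵥ u) := by
      rw [dot_symm_mulVec hA.1, dotProduct_comm]
    simp only [mulVec_sub, dotProduct_sub, sub_dotProduct]
    linarith [hsym]
  have e1 : u ⬝ᵥ (A *ᵥ u) = x ⬝ᵥ u := by rw [dot_symm_mulVec hA.1, hAu]
  have e2 : v ⬝ᵥ (A *ᵥ u) = v ⬝ᵥ x := by rw [hAu]
  have e3 : v ⬝ᵥ (B *ᵥ v) = v ⬝ᵥ x := by rw [hBv]
  have e4 : v ⬝ᵥ x = x ⬝ᵥ v := dotProduct_comm _ _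
  have e5 : u ⬝ᵥ x = x ⬝ᵥ u := dotProduct_comm _ _
  rw [hexp] at h1
  nlinarith [h1, h2, e1, e2, e3]

lemma quad_inv_nonneg {A : Matrix (Fin n) (Fin n) ℝ} (hA : A.PosDef) (x : Fin n → ℝ) :
    0 ≤ x ⬝ᵥ (A⁻¹ *ᵥ x) := by simpa using hA.inv.posSemidef.dotProduct_mulVec_nonneg x

lemma det_step {V : Matrix (Fin n) (Fin n) ℝ} (c : ℝ)
    (a : Fin n → ℝ) {W : Matrix (Fin n) (Fin n) ℝ}
    (hW : W = V + c • vecMulVec a a) (hWpd : W.PosDef) :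
    c * (a ⬝ᵥ (W⁻¹ *ᵥ a)) = 1 - V.det / W.det := by
  have hWdet : IsUnit W.det := isUnit_iff_ne_zero.2 hWpd.det_pos.ne'
  have hVW : V = W + replicateCol (Fin 1) ((-c) • a) * replicateRow (Fin 1) a := by
    rw [hW]
    ext i j
    simp [vecMulVec_apply, Matrix.mul_apply]
    ring
  have hdl : (W + replicateCol (Fin 1) ((-c) • a) * replicateRow (Fin 1) a).det
      = W.det * (1 + replicateRow (Fin 1) a * W⁻¹ * replicateCol (Fin 1) ((-c) • a)).det := by
    convert Matrix.det_add_replicateCol_mul_replicateRow (ι := Fin 1) hWdet ((-c) • a) a <;> rfl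
  rw [← hVW] at hdl
  have h1x1 : (1 + replicateRow (Fin 1) a * W⁻¹ * replicateCol (Fin 1) ((-c) • a)).det
      = 1 - c * (a ⬝ᵥ (W⁻¹ *ᵥ a)) := by
    rw [Matrix.det_unique]
    simp only [Matrix.add_apply, Matrix.one_apply_eq]
    rw [Matrix.mul_assoc]
    have : (replicateRow (Fin 1) a * (W⁻¹ * replicateCol (Fin 1) ((-c) • a)))
        = replicateRow (Fin 1) a * replicateCol (Fin 1) (W⁻¹ *ᵥ ((-c) • a)) := by
      rw [replicateCol_mulVec]
    rw [this, replicateRow_mul_replicateCol_apply]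
    rw [mulVec_smul, dotProduct_smul]
    simp; ring
  have key : V.det = W.det * (1 - c * (a ⬝ᵥ (W⁻¹ *ᵥ a))) := by
    rw [hdl]; exact congrArg _ h1x1
  have hWd := hWpd.det_pos
  rw [key, mul_div_cancel_left₀ _ hWd.ne']
  ring

lemma det_step_log {V : Matrix (Fin n) (Fin n) ℝ} (hV : V.PosDef) (c : ℝ)
    (a : Fin n → ℝ) {W : Matrix (Fin n) (Fin n) ℝ}
    (hW : W = V + c • vecMulVec a a) (hWpd : W.PosDef) :
    c * (a ⬝ᵥ (W⁻¹ *ᵥ a)) ≤ Real.log W.det - Real.log V.det := by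
  have h := det_step c a hW hWpd
  have hVd := hV.det_pos
  have hWd := hWpd.det_pos
  have hr : (0:ℝ) < V.det / W.det := div_pos hVd hWd
  have hlog := Real.log_le_sub_one_of_pos hr
  rw [Real.log_div hVd.ne' hWd.ne'] at hlog
  linarith

lemma trace_eq_sum_eig {A : Matrix (Fin n) (Fin n) ℝ} (hA : A.IsHermitian) :
    A.trace = ∑ i, hA.eigenvalues i := by
  conv_lhs => rw [hA.spectral_theorem]
  rw [Unitary.conjStarAlgAut_apply, Matrix.trace_mul_cycle,
    (Matrix.mem_unitaryGroup_iff').mp (hA.eigenvectorUnitary).2, Matrix.one_mul,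
    Matrix.trace_diagonal]
  simp

lemma psd_trace_nonneg {A : Matrix (Fin n) (Fin n) ℝ} (hA : A.PosSemidef) :
    0 ≤ A.trace := by
  rw [trace_eq_sum_eig hA.isHermitian]
  exact Finset.sum_nonneg fun i _ => hA.eigenvalues_nonneg i

lemma det_le_trace_pow {A : Matrix (Fin n) (Fin n) ℝ} (hn : 0 < n) (hA : A.PosSemidef) :
    A.det ≤ (A.trace / n) ^ n := by
  have hH := hA.isHermitian
  have hev : ∀ i, 0 ≤ hH.eigenvalues i := hA.eigenvalues_nonneg
  have hdet : A.det = ∏ i, hH.eigenvalues i := by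
    have := hH.det_eq_prod_eigenvalues
    simpa using this
  have htr : A.trace = ∑ i, hH.eigenvalues i := trace_eq_sum_eig hH
  have hgm := Real.geom_mean_le_arith_mean_weighted Finset.univ
      (fun _ => (n : ℝ)⁻¹) hH.eigenvalues
      (fun i _ => by positivity)
      (by simp [Finset.card_univ]; field_simp)
      (fun i _ => hev i)
  have hrhs : ∑ i, (n : ℝ)⁻¹ * hH.eigenvalues i = A.trace / n := by
    rw [htr, ← Finset.mul_sum]; ring
  rw [hrhs] at hgm
  have hlhs_nonneg : 0 ≤ ∏ i, hH.eigenvalues i ^ ((n : ℝ)⁻¹) :=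
    Finset.prod_nonneg fun i _ => Real.rpow_nonneg (hev i) _
  have hpow := pow_le_pow_left₀ hlhs_nonneg hgm n
  rw [← Finset.prod_pow] at hpow
  have : ∀ i : Fin n, (hH.eigenvalues i ^ ((n:ℝ)⁻¹)) ^ n = hH.eigenvalues i := by
    intro i
    rw [← Real.rpow_natCast (hH.eigenvalues i ^ ((n:ℝ)⁻¹)) n, ← Real.rpow_mul (hev i)]
    rw [inv_mul_cancel₀ (by exact_mod_cast hn.ne' : (n:ℝ) ≠ 0), Real.rpow_one]
  rw [Finset.prod_congr rfl (fun i _ => this i)] at hpow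
  rw [hdet]
  exact hpow

lemma trace_vmv (a : Fin n → ℝ) : (vecMulVec a a).trace = a ⬝ᵥ a := by
  simp [Matrix.trace, Matrix.diag, vecMulVec_apply, dotProduct]

end Helpers

theorem stmt10 {n : ℕ} (hn : 0 < n) (N : ℕ) (φ L : ℝ) (hφ : 0 < φ) (hL : 0 < L)
    (η : ℕ → ℝ) (hη0 : 0 < η 0) (hηmono : ∀ t, t < N → η t ≤ η (t + 1))
    (a : ℕ → Fin n → ℝ)
    (ha : ∀ t ∈ Finset.Icc 1 N, Real.sqrt (a t ⬝ᵥ a t) ≤ L)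
    (d : ℕ → ℕ) (m : ℕ → Finset ℕ)
    (hm : ∀ t, m t = (Finset.Ico 1 t).filter (fun τ => t ≤ τ + d τ))
    (A : ℕ → Matrix (Fin n) (Fin n) ℝ)
    (hA : ∀ t, A t = η t • (1 : Matrix (Fin n) (Fin n) ℝ)
        + φ • ∑ τ ∈ Finset.Icc 1 t, Matrix.vecMulVec (a τ) (a τ))
    (dmax : ℕ) (hdmax : dmax = (Finset.Icc 1 N).sup (fun τ => min (d τ) (N - τ))) :
    ∑ t ∈ Finset.Icc 1 N,
        Real.sqrt (a t ⬝ᵥ (A t)⁻¹.mulVec (a t)) *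
          (∑ τ ∈ m t, Real.sqrt (a τ ⬝ᵥ (A t)⁻¹.mulVec (a τ))) ≤
      2 * n * dmax / φ * Real.log (1 + φ * L ^ 2 * N / (η 0 * n)) := by
  classical
  -- the reference matrices V t
  set V : ℕ → Matrix (Fin n) (Fin n) ℝ := fun t =>
    η 0 • (1 : Matrix (Fin n) (Fin n) ℝ)
      + φ • ∑ τ ∈ Finset.Icc 1 t, Matrix.vecMulVec (a τ) (a τ) with hV
  -- monotonicity of η up to N
  have hchain : ∀ t, t ≤ N → ∀ s, s ≤ t → η s ≤ η t := by
    intro t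
    induction t with
    | zero => intro _ s hs; have : s = 0 := Nat.le_zero.mp hs; simp [this]
    | succ k ih =>
      intro ht s hs
      by_cases h : s = k + 1
      · simp [h]
      · have hsk : s ≤ k := by omega
        exact le_trans (ih (by omega) s hsk) (hηmono k (by omega))
  have hηpos : ∀ t, t ≤ N → 0 < η t := fun t ht =>
    lt_of_lt_of_le hη0 (hchain t ht 0 (Nat.zero_le t))
  have hVpd : ∀ t, (V t).PosDef := fun t =>
    Matrix.PosDef.add_posSemidef (smul_one_posdef hη0) (smul_psd hφ.le (sum_vmv_psd a _))
  have hApd : ∀ t, t ≤ N → (A t).PosDef := by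
    intro t ht
    rw [hA t]
    exact Matrix.PosDef.add_posSemidef (smul_one_posdef (hηpos t ht))
      (smul_psd hφ.le (sum_vmv_psd a _))
  have hAV : ∀ t, t ≤ N → (A t - V t).PosSemidef := by
    intro t ht
    have : A t - V t = (η t - η 0) • (1 : Matrix (Fin n) (Fin n) ℝ) := by
      simp only [hA t, hV]
      rw [sub_smul]
      abel
    rw [this]
    exact smul_psd (sub_nonneg.2 (hchain t ht 0 (Nat.zero_le t))) Matrix.PosSemidef.one
  have hAA : ∀ τ t, τ ≤ t → t ≤ N → (A t - A τ).PosSemidef := by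
    intro τ t hτt ht
    have hsum : (∑ σ ∈ Finset.Icc 1 τ, Matrix.vecMulVec (a σ) (a σ))
        + ∑ σ ∈ Finset.Ioc τ t, Matrix.vecMulVec (a σ) (a σ)
        = ∑ σ ∈ Finset.Icc 1 t, Matrix.vecMulVec (a σ) (a σ) := by
      rw [show Finset.Icc 1 τ = Finset.Ioc 0 τ from Finset.Icc_add_one_left_eq_Ioc 0 τ,
        show Finset.Icc 1 t = Finset.Ioc 0 t from Finset.Icc_add_one_left_eq_Ioc 0 t]
      exact Finset.sum_Ioc_consecutive _ (Nat.zero_le τ) hτt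
    have hdiff : A t - A τ = (η t - η τ) • (1 : Matrix (Fin n) (Fin n) ℝ)
        + φ • ∑ σ ∈ Finset.Ioc τ t, Matrix.vecMulVec (a σ) (a σ) := by
      rw [hA t, hA τ, ← hsum, smul_add, sub_smul]
      abel
    rw [hdiff]
    exact Matrix.PosSemidef.add
      (smul_psd (sub_nonneg.2 (hchain t ht τ hτt)) Matrix.PosSemidef.one)
      (smul_psd hφ.le (sum_vmv_psd a _))
  -- notation
  set b : ℕ → ℝ := fun t => Real.sqrt (a t ⬝ᵥ (A t)⁻¹ *ᵥ a t) with hb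
  set q : ℕ → ℝ := fun t => a t ⬝ᵥ (V t)⁻¹ *ᵥ a t with hq
  have hbnn : ∀ t, 0 ≤ b t := fun t => Real.sqrt_nonneg _
  have hbsq : ∀ t, t ≤ N → b t ^ 2 = a t ⬝ᵥ (A t)⁻¹ *ᵥ a t := fun t ht =>
    Real.sq_sqrt (quad_inv_nonneg (hApd t ht) (a t))
  have hbq : ∀ t, t ≤ N → b t ^ 2 ≤ q t := by
    intro t ht
    rw [hbsq t ht]
    exact quad_inv_anti (hVpd t) (hApd t ht) (hAV t ht) (a t)
  -- step and telescope
  have hstep : ∀ k, k < N → φ * q (k + 1)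
      ≤ Real.log (V (k + 1)).det - Real.log (V k).det := by
    intro k hk
    refine det_step_log (hVpd k) φ (a (k + 1)) ?_ (hVpd (k + 1))
    show V (k+1) = V k + φ • vecMulVec (a (k+1)) (a (k+1))
    simp only [hV]
    rw [Finset.sum_Icc_succ_top (by omega : 1 ≤ k + 1), smul_add, add_assoc]
  have htel : ∑ t ∈ Finset.Icc 1 N, (φ * q t)
      ≤ Real.log (V N).det - Real.log (V 0).det := by
    have h1 : ∑ t ∈ Finset.Icc 1 N, (φ * q t)
        = ∑ i ∈ Finset.range N, φ * q (i + 1) := by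
      rw [← Finset.Ico_add_one_right_eq_Icc, Finset.sum_Ico_eq_sum_range _ 1 (N+1)]
      simp only [Nat.add_sub_cancel]
      exact Finset.sum_congr rfl fun i _ => by rw [Nat.add_comm 1 i]
    rw [h1]
    calc ∑ i ∈ Finset.range N, φ * q (i + 1)
        ≤ ∑ i ∈ Finset.range N,
            (Real.log (V (i + 1)).det - Real.log (V i).det) :=
          Finset.sum_le_sum fun i hi => hstep i (Finset.mem_range.mp hi)
      _ = Real.log (V N).det - Real.log (V 0).det :=
          Finset.sum_range_sub (fun i => Real.log (V i).det) N
  -- trace bound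
  have hasq : ∀ τ ∈ Finset.Icc 1 N, a τ ⬝ᵥ a τ ≤ L ^ 2 := by
    intro τ hτ
    have h0 : 0 ≤ a τ ⬝ᵥ a τ := Finset.sum_nonneg fun i _ => mul_self_nonneg _
    have := ha τ hτ
    nlinarith [Real.sq_sqrt h0, Real.sqrt_nonneg (a τ ⬝ᵥ a τ)]
  have htrace : (V N).trace ≤ η 0 * n + φ * (L ^ 2 * N) := by
    simp only [hV]
    rw [Matrix.trace_add, Matrix.trace_smul, Matrix.trace_smul, Matrix.trace_one,
      Matrix.trace_sum]
    have : ∑ τ ∈ Finset.Icc 1 N, (vecMulVec (a τ) (a τ)).trace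
        = ∑ τ ∈ Finset.Icc 1 N, a τ ⬝ᵥ a τ := by
      exact Finset.sum_congr rfl fun τ _ => trace_vmv (a τ)
    rw [this]
    have hsum : ∑ τ ∈ Finset.Icc 1 N, a τ ⬝ᵥ a τ ≤ N * L ^ 2 := by
      calc ∑ τ ∈ Finset.Icc 1 N, a τ ⬝ᵥ a τ ≤ ∑ τ ∈ Finset.Icc 1 N, L ^ 2 :=
            Finset.sum_le_sum hasq
        _ = N * L ^ 2 := by rw [Finset.sum_const, Nat.card_Icc]; simp [mul_comm]
    simp only [smul_eq_mul, Fintype.card_fin]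
    nlinarith [hsum, hφ.le]
  -- log det bounds
  have hX : (0:ℝ) < η 0 + φ * L ^ 2 * N / n := by positivity
  have hlogVN : Real.log (V N).det ≤ n * Real.log (η 0 + φ * L ^ 2 * N / n) := by
    have hdle : (V N).det ≤ (η 0 + φ * L ^ 2 * N / n) ^ n := by
      calc (V N).det ≤ ((V N).trace / n) ^ n := det_le_trace_pow hn (hVpd N).posSemidef
        _ ≤ (η 0 + φ * L ^ 2 * N / n) ^ n := by
            apply pow_le_pow_left₀
            · exact div_nonneg (psd_trace_nonneg (hVpd N).posSemidef) (Nat.cast_nonneg n)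
            · rw [div_le_iff₀ (by exact_mod_cast hn : (0:ℝ) < n)]
              calc (V N).trace ≤ η 0 * n + φ * (L ^ 2 * N) := htrace
                _ = (η 0 + φ * L ^ 2 * N / n) * n := by
                    field_simp
    calc Real.log (V N).det ≤ Real.log ((η 0 + φ * L ^ 2 * N / n) ^ n) :=
          Real.log_le_log (hVpd N).det_pos hdle
      _ = n * Real.log (η 0 + φ * L ^ 2 * N / n) := by rw [Real.log_pow]
  have hlogV0 : Real.log (V 0).det = n * Real.log (η 0) := by
    have h0 : V 0 = η 0 • (1 : Matrix (Fin n) (Fin n) ℝ) := by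
      simp only [hV]
      simp
    rw [h0, Matrix.det_smul, Matrix.det_one, mul_one, Fintype.card_fin, Real.log_pow]
  have hlogdiff : Real.log (V N).det - Real.log (V 0).det
      ≤ n * Real.log (1 + φ * L ^ 2 * N / (η 0 * n)) := by
    have hn' : (n:ℝ) ≠ 0 := by exact_mod_cast hn.ne'
    have harg : (η 0 + φ * L ^ 2 * N / n) / η 0 = 1 + φ * L ^ 2 * N / (η 0 * n) := by
      rw [div_eq_iff hη0.ne']
      field_simp
    have : Real.log (η 0 + φ * L ^ 2 * N / n) - Real.log (η 0)
        = Real.log (1 + φ * L ^ 2 * N / (η 0 * n)) := by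
      rw [← Real.log_div hX.ne' hη0.ne', harg]
    calc Real.log (V N).det - Real.log (V 0).det
        ≤ n * Real.log (η 0 + φ * L ^ 2 * N / n) - n * Real.log (η 0) := by
          rw [hlogV0] at *
          linarith [hlogVN]
      _ = n * (Real.log (η 0 + φ * L ^ 2 * N / n) - Real.log (η 0)) := by ring
      _ = n * Real.log (1 + φ * L ^ 2 * N / (η 0 * n)) := by rw [this]
  -- sum of squares bound
  have hsumq : ∑ t ∈ Finset.Icc 1 N, q t
      ≤ (n / φ) * Real.log (1 + φ * L ^ 2 * N / (η 0 * n)) := by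
    have h1 : φ * ∑ t ∈ Finset.Icc 1 N, q t
        ≤ n * Real.log (1 + φ * L ^ 2 * N / (η 0 * n)) := by
      rw [Finset.mul_sum]
      exact le_trans htel hlogdiff
    rw [div_mul_eq_mul_div, le_div_iff₀ hφ]
    linarith [h1]
  have hsumb : ∑ t ∈ Finset.Icc 1 N, b t ^ 2 ≤ ∑ t ∈ Finset.Icc 1 N, q t :=
    Finset.sum_le_sum fun t ht => hbq t (Finset.mem_Icc.mp ht).2
  -- combinatorial bounds
  have hmin_le : ∀ τ, 1 ≤ τ → τ ≤ N → min (d τ) (N - τ) ≤ dmax := by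
    intro τ h1 h2
    rw [hdmax]
    exact Finset.le_sup (f := fun τ => min (d τ) (N - τ)) (Finset.mem_Icc.mpr ⟨h1, h2⟩)
  have hcard_m : ∀ t ∈ Finset.Icc 1 N, (m t).card ≤ dmax := by
    intro t ht
    rw [Finset.mem_Icc] at ht
    have hsub : m t ⊆ Finset.Ico (t - dmax) t := by
      intro τ hτ
      rw [hm t, Finset.mem_filter, Finset.mem_Ico] at hτ
      obtain ⟨⟨h1τ, hτt⟩, htd⟩ := hτ
      have hmin := hmin_le τ h1τ (by omega)
      rw [Finset.mem_Ico]
      omega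
    calc (m t).card ≤ (Finset.Ico (t - dmax) t).card := Finset.card_le_card hsub
      _ = t - (t - dmax) := Nat.card_Ico _ _
      _ ≤ dmax := by omega
  have hcard_t : ∀ τ ∈ Finset.Icc 1 N,
      ((Finset.Icc 1 N).filter (fun t => τ ∈ m t)).card ≤ dmax := by
    intro τ hτ
    rw [Finset.mem_Icc] at hτ
    have hsub : (Finset.Icc 1 N).filter (fun t => τ ∈ m t)
        ⊆ Finset.Ioc τ (τ + dmax) := by
      intro t htt
      rw [Finset.mem_filter, Finset.mem_Icc] at htt
      obtain ⟨⟨h1t, htN⟩, hτm⟩ := htt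
      rw [hm t, Finset.mem_filter, Finset.mem_Ico] at hτm
      obtain ⟨⟨h1τ, hτt⟩, htd⟩ := hτm
      have hmin := hmin_le τ h1τ hτ.2
      rw [Finset.mem_Ioc]
      omega
    calc ((Finset.Icc 1 N).filter (fun t => τ ∈ m t)).card
        ≤ (Finset.Ioc τ (τ + dmax)).card := Finset.card_le_card hsub
      _ = dmax := by rw [Nat.card_Ioc]; omega
  -- bound inner sqrt terms
  have hinner : ∀ t ∈ Finset.Icc 1 N, ∀ τ ∈ m t,
      Real.sqrt (a τ ⬝ᵥ (A t)⁻¹ *ᵥ a τ) ≤ b τ := by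
    intro t ht τ hτ
    rw [Finset.mem_Icc] at ht
    rw [hm t, Finset.mem_filter, Finset.mem_Ico] at hτ
    exact Real.sqrt_le_sqrt
      (quad_inv_anti (hApd τ (by omega)) (hApd t ht.2)
        (hAA τ t (by omega) ht.2) (a τ))
  -- term-count bounds applied to the double sums
  have T1 : ∑ t ∈ Finset.Icc 1 N, ∑ _τ ∈ m t, b t ^ 2 / 2
      ≤ (dmax : ℝ) * ∑ t ∈ Finset.Icc 1 N, b t ^ 2 / 2 := by
    rw [Finset.mul_sum]
    refine Finset.sum_le_sum fun t ht => ?_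
    rw [Finset.sum_const, nsmul_eq_mul]
    exact mul_le_mul_of_nonneg_right
      (by exact_mod_cast hcard_m t ht) (by positivity)
  have T2 : ∑ t ∈ Finset.Icc 1 N, ∑ τ ∈ m t, b τ ^ 2 / 2
      ≤ (dmax : ℝ) * ∑ τ ∈ Finset.Icc 1 N, b τ ^ 2 / 2 := by
    have hrw : ∀ t ∈ Finset.Icc 1 N, ∑ τ ∈ m t, b τ ^ 2 / 2
        = ∑ τ ∈ Finset.Icc 1 N, if τ ∈ m t then b τ ^ 2 / 2 else 0 := by
      intro t ht
      have hsub : m t ⊆ Finset.Icc 1 N := by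
        intro τ hτ
        rw [hm t, Finset.mem_filter, Finset.mem_Ico] at hτ
        rw [Finset.mem_Icc] at ht ⊢
        omega
      rw [Finset.sum_ite_mem, Finset.inter_eq_right.mpr hsub]
    rw [Finset.sum_congr rfl hrw, Finset.sum_comm, Finset.mul_sum]
    refine Finset.sum_le_sum fun τ hτ => ?_
    rw [← Finset.sum_filter, Finset.sum_const, nsmul_eq_mul]
    exact mul_le_mul_of_nonneg_right
      (by exact_mod_cast hcard_t τ hτ) (by positivity)
  -- main estimate
  have hmain : ∑ t ∈ Finset.Icc 1 N,
      Real.sqrt (a t ⬝ᵥ (A t)⁻¹ *ᵥ a t) *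
        (∑ τ ∈ m t, Real.sqrt (a τ ⬝ᵥ (A t)⁻¹ *ᵥ a τ))
      ≤ (dmax : ℝ) * ∑ t ∈ Finset.Icc 1 N, b t ^ 2 := by
    have step1 : ∀ t ∈ Finset.Icc 1 N,
        Real.sqrt (a t ⬝ᵥ (A t)⁻¹ *ᵥ a t) *
          (∑ τ ∈ m t, Real.sqrt (a τ ⬝ᵥ (A t)⁻¹ *ᵥ a τ))
        ≤ ∑ τ ∈ m t, (b t ^ 2 / 2 + b τ ^ 2 / 2) := by
      intro t ht
      have hbt : Real.sqrt (a t ⬝ᵥ (A t)⁻¹ *ᵥ a t) = b t := rfl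
      rw [hbt, Finset.mul_sum]
      refine Finset.sum_le_sum fun τ hτ => ?_
      have h1 := hinner t ht τ hτ
      have h2 : b t * Real.sqrt (a τ ⬝ᵥ (A t)⁻¹ *ᵥ a τ) ≤ b t * b τ :=
        mul_le_mul_of_nonneg_left h1 (hbnn t)
      nlinarith [sq_nonneg (b t - b τ), hbnn t, hbnn τ]
    calc ∑ t ∈ Finset.Icc 1 N,
        Real.sqrt (a t ⬝ᵥ (A t)⁻¹ *ᵥ a t) *
          (∑ τ ∈ m t, Real.sqrt (a τ ⬝ᵥ (A t)⁻¹ *ᵥ a τ))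
        ≤ ∑ t ∈ Finset.Icc 1 N, ∑ τ ∈ m t, (b t ^ 2 / 2 + b τ ^ 2 / 2) :=
          Finset.sum_le_sum step1
      _ = (∑ t ∈ Finset.Icc 1 N, ∑ _τ ∈ m t, b t ^ 2 / 2)
          + ∑ t ∈ Finset.Icc 1 N, ∑ τ ∈ m t, b τ ^ 2 / 2 := by
          rw [← Finset.sum_add_distrib]
          exact Finset.sum_congr rfl fun t _ => Finset.sum_add_distrib
      _ ≤ (dmax : ℝ) * ∑ t ∈ Finset.Icc 1 N, b t ^ 2 / 2
          + (dmax : ℝ) * ∑ τ ∈ Finset.Icc 1 N, b τ ^ 2 / 2 := add_le_add T1 T2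
      _ = (dmax : ℝ) * ∑ t ∈ Finset.Icc 1 N, b t ^ 2 := by
          rw [← Finset.sum_div]
          ring
  -- final chain
  have hlognn : 0 ≤ Real.log (1 + φ * L ^ 2 * N / (η 0 * n)) :=
    Real.log_nonneg (le_add_of_nonneg_right (by positivity))
  have hdnn : (0:ℝ) ≤ (dmax : ℝ) := Nat.cast_nonneg _
  calc ∑ t ∈ Finset.Icc 1 N,
      Real.sqrt (a t ⬝ᵥ (A t)⁻¹.mulVec (a t)) *
        (∑ τ ∈ m t, Real.sqrt (a τ ⬝ᵥ (A t)⁻¹.mulVec (a τ)))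
      ≤ (dmax : ℝ) * ∑ t ∈ Finset.Icc 1 N, b t ^ 2 := hmain
    _ ≤ (dmax : ℝ) * ∑ t ∈ Finset.Icc 1 N, q t :=
        mul_le_mul_of_nonneg_left hsumb hdnn
    _ ≤ (dmax : ℝ) * ((n / φ) * Real.log (1 + φ * L ^ 2 * N / (η 0 * n))) :=
        mul_le_mul_of_nonneg_left hsumq hdnn
    _ ≤ 2 * n * dmax / φ * Real.log (1 + φ * L ^ 2 * N / (η 0 * n)) := by
        have hnn : (0:ℝ) ≤ (n:ℝ) * dmax / φ := by positivity
        set X := Real.log (1 + φ * L ^ 2 * N / (η 0 * n)) with hXdef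
        have h1 : (dmax:ℝ) * ((n:ℝ) / φ * X) = ((n:ℝ) * dmax / φ) * X := by ring
        have h2 : 2 * (n:ℝ) * dmax / φ * X = 2 * (((n:ℝ) * dmax / φ) * X) := by ring
        rw [h1, h2]
        linarith [mul_nonneg hnn hlognn]
end

section
/- Let T ≥ 2 and let (o_t)_{t=1}^{T+1} be a nondecreasing sequence of subsets of ℕ with o_1 = ∅, o_{t+1} ⊆ [t], and |o_{T+1}| = T. Then ∑_{t=1}^T (|o_{t+1}| - |o_t|)/t ≤ 1 + ln T. -/
noncomputable def gfun : ℕ → ℝ := fun n => if n = 0 then 0 else 1 + Real.log n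

lemma gfun_step (a b t : ℕ) (hab : a ≤ b) (hbt : b ≤ t) (ht : 1 ≤ t) :
    ((b : ℝ) - a) / t ≤ gfun b - gfun a := by
  have ht0 : (0:ℝ) < t := by exact_mod_cast ht
  rcases Nat.eq_or_lt_of_le hab with h | h
  · subst h; simp [gfun]
  · have hb0 : 0 < b := Nat.pos_of_ne_zero (by omega)
    have hbR : (0:ℝ) < b := by exact_mod_cast hb0
    rcases Nat.eq_zero_or_pos a with ha | ha
    · subst ha
      rw [show gfun 0 = 0 by simp [gfun], show gfun b = 1 + Real.log b by simp [gfun, hb0.ne'],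
        sub_zero]
      push_cast
      have h1 : ((b:ℝ) - 0) / t ≤ 1 := by
        rw [sub_zero, div_le_one ht0]
        exact_mod_cast hbt
      have h2 : (0:ℝ) ≤ Real.log b := Real.log_nonneg (by exact_mod_cast hb0)
      linarith
    · have haR : (0:ℝ) < a := by exact_mod_cast ha
      simp only [gfun, if_neg ha.ne', if_neg hb0.ne']
      have key : Real.log ((a:ℝ) / b) ≤ (a:ℝ)/b - 1 :=
        Real.log_le_sub_one_of_pos (by positivity)
      rw [Real.log_div haR.ne' hbR.ne'] at key
      have h2 : ((b:ℝ) - a)/t ≤ ((b:ℝ) - a)/b := by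
        apply div_le_div_of_nonneg_left _ hbR (by exact_mod_cast hbt)
        have : (a:ℝ) ≤ b := by exact_mod_cast hab
        linarith
      have h3 : ((b:ℝ) - a)/b = 1 - (a:ℝ)/b := by field_simp
      rw [h3] at h2
      linarith

theorem stmt14 (T : ℕ) (hT : 2 ≤ T) (o : ℕ → Finset ℕ)
    (ho1 : o 1 = ∅)
    (hmono : ∀ t ∈ Finset.Icc 1 T, o t ⊆ o (t + 1))
    (hsub : ∀ t ∈ Finset.Icc 1 T, o (t + 1) ⊆ Finset.Icc 1 t)
    (hcard : (o (T + 1)).card = T) :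
    ∑ t ∈ Finset.Icc 1 T, (((o (t + 1)).card : ℝ) - ((o t).card : ℝ)) / t ≤
      1 + Real.log T := by
  have hstep : ∀ t ∈ Finset.Icc 1 T,
      (((o (t + 1)).card : ℝ) - ((o t).card : ℝ)) / t ≤
        gfun (o (t+1)).card - gfun (o t).card := by
    intro t ht
    obtain ⟨ht1, htT⟩ := Finset.mem_Icc.mp ht
    refine gfun_step _ _ _ (Finset.card_le_card (hmono t ht)) ?_ ht1
    calc (o (t+1)).card ≤ (Finset.Icc 1 t).card := Finset.card_le_card (hsub t ht)
      _ = t := by simp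
  calc ∑ t ∈ Finset.Icc 1 T, (((o (t + 1)).card : ℝ) - ((o t).card : ℝ)) / t
      ≤ ∑ t ∈ Finset.Icc 1 T, (gfun (o (t+1)).card - gfun (o t).card) :=
        Finset.sum_le_sum hstep
    _ = gfun (o (T+1)).card - gfun (o 1).card := by
        have hIcc : Finset.Icc 1 T = (Finset.range T).map ⟨Nat.succ, Nat.succ_injective⟩ := by
          ext x
          simp only [Finset.mem_Icc, Finset.mem_map, Finset.mem_range,
            Function.Embedding.coeFn_mk, Nat.succ_eq_add_one]
          constructor
          · rintro ⟨h1, h2⟩; exact ⟨x - 1, by omega, by omega⟩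
          · rintro ⟨a, ha, rfl⟩; omega
        rw [hIcc, Finset.sum_map]
        simp only [Function.Embedding.coeFn_mk, Nat.succ_eq_add_one]
        exact Finset.sum_range_sub (fun i => gfun (o (i+1)).card) T
    _ ≤ 1 + Real.log T := by
        rw [ho1, hcard]
        have hT0 : T ≠ 0 := by omega
        simp [gfun, hT0]
end

section
/- Let A be a convex subset of ℝⁿ, ψ a differentiable convex function, D_ψ(x,y) = ψ(x) - ψ(y) - ⟨∇ψ(y), x - y⟩ the Bregman divergence, g ∈ ℝⁿ, x₁ ∈ A, and x₂ = argmin_{x∈A}(⟨g,x⟩ + D_ψ(x, x₁)). Then for any u ∈ A, ⟨x₂ - u, g⟩ ≤ D_ψ(u, x₁) - D_ψ(u, x₂) - D_ψ(x₂, x₁). -/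
open RealInnerProductSpace

theorem stmt16 {n : ℕ} (A : Set (EuclideanSpace ℝ (Fin n))) (hA : Convex ℝ A)
    (ψ : EuclideanSpace ℝ (Fin n) → ℝ)
    (ψ' : EuclideanSpace ℝ (Fin n) → EuclideanSpace ℝ (Fin n))
    (hψconv : ConvexOn ℝ Set.univ ψ)
    (hψdiff : ∀ x, HasGradientAt ψ (ψ' x) x)
    (D : EuclideanSpace ℝ (Fin n) → EuclideanSpace ℝ (Fin n) → ℝ)
    (hD : ∀ x y, D x y = ψ x - ψ y - ⟪ψ' y, x - y⟫)
    (g x₁ x₂ : EuclideanSpace ℝ (Fin n))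
    (hx₁ : x₁ ∈ A) (hx₂ : x₂ ∈ A)
    (hmin : ∀ x ∈ A, ⟪g, x₂⟫ + D x₂ x₁ ≤ ⟪g, x⟫ + D x x₁) :
    ∀ u ∈ A, ⟪x₂ - u, g⟫ ≤ D u x₁ - D u x₂ - D x₂ x₁ := by
  intro u hu
  set v : EuclideanSpace ℝ (Fin n) := u - x₂ with hv
  set c : ℝ := ⟪g, v⟫ - ⟪ψ' x₁, v⟫ with hc
  set φ : ℝ → ℝ := fun t => ψ (x₂ + t • v) with hφdef
  -- membership of the segment points
  have hseg : ∀ t : ℝ, t ∈ Set.Ioc (0:ℝ) 1 → x₂ + t • v ∈ A := by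
    intro t ht
    have h := hA hx₂ hu (by linarith [ht.2] : (0:ℝ) ≤ 1 - t) (le_of_lt ht.1)
      (by ring)
    have heq : (1 - t) • x₂ + t • u = x₂ + t • v := by
      simp only [hv, smul_sub, sub_smul, one_smul]
      abel
    rwa [heq] at h
  -- the derivative of ψ along the segment
  have hφ : HasDerivAt φ ⟪ψ' x₂, v⟫ 0 := by
    have hline : HasDerivAt (fun t : ℝ => x₂ + t • v) v 0 := by
      simpa using ((hasDerivAt_id (0:ℝ)).smul_const v).const_add x₂
    have hF := (hψdiff x₂).hasFDerivAt
    have hF' : HasFDerivAt ψ ((InnerProductSpace.toDual ℝ _) (ψ' x₂))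
        ((fun t : ℝ => x₂ + t • v) 0) := by simpa using hF
    have := hF'.comp_hasDerivAt 0 hline
    simpa [hφdef, InnerProductSpace.toDual_apply_apply, Function.comp_def] using this
  -- slope inequality on (0,1]
  have hslope : ∀ t : ℝ, t ∈ Set.Ioc (0:ℝ) 1 → 0 ≤ c + slope φ 0 t := by
    intro t ht
    have ht0 : (0:ℝ) < t := ht.1
    have h := hmin _ (hseg t ht)
    rw [hD, hD] at h
    have hinner1 : ⟪g, x₂ + t • v⟫ = ⟪g, x₂⟫ + t * ⟪g, v⟫ := by
      rw [inner_add_right, real_inner_smul_right]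
    have hinner2 : ⟪ψ' x₁, x₂ + t • v - x₁⟫ = ⟪ψ' x₁, x₂ - x₁⟫ + t * ⟪ψ' x₁, v⟫ := by
      have heq : x₂ + t • v - x₁ = (x₂ - x₁) + t • v := by abel
      rw [heq, inner_add_right, real_inner_smul_right]
    rw [hinner1, hinner2] at h
    have hdiv : 0 ≤ t * c + (φ t - φ 0) := by
      simp only [hφdef, hc, zero_smul, add_zero]
      nlinarith [h]
    have hq : 0 ≤ (t * c + (φ t - φ 0)) / t := div_nonneg hdiv ht0.le
    have hrw : c + slope φ 0 t = (t * c + (φ t - φ 0)) / t := by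
      rw [slope_def_field]
      field_simp
      rw [sub_zero, mul_add, mul_div_assoc', mul_comm t (φ t - φ 0), mul_div_assoc, div_self ht0.ne', mul_one]
      ring
    rw [hrw]
    exact hq
  -- pass to the limit t → 0⁺
  have hkey : 0 ≤ c + ⟪ψ' x₂, v⟫ := by
    have htend : Filter.Tendsto (fun t => c + slope φ 0 t) (nhdsWithin 0 (Set.Ioi 0))
        (nhds (c + ⟪ψ' x₂, v⟫)) := by
      have h1 : Filter.Tendsto (slope φ 0) (nhdsWithin 0 {(0:ℝ)}ᶜ) (nhds ⟪ψ' x₂, v⟫) :=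
        hasDerivAt_iff_tendsto_slope.mp hφ
      have h2 : Filter.Tendsto (slope φ 0) (nhdsWithin 0 (Set.Ioi 0)) (nhds ⟪ψ' x₂, v⟫) :=
        h1.mono_left (nhdsWithin_mono 0 (fun x hx => ne_of_gt hx))
      exact tendsto_const_nhds.add h2
    refine ge_of_tendsto htend ?_
    filter_upwards [Ioc_mem_nhdsGT_of_mem (Set.left_mem_Ico.mpr one_pos)] with t ht
    exact hslope t ht
  -- conclude by algebra
  have e1 : ⟪x₂ - u, g⟫ = -⟪g, v⟫ := by
    rw [real_inner_comm]
    have : x₂ - u = -v := by simp [hv]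
    rw [this, inner_neg_right]
  have e2 : ⟪ψ' x₁, u - x₁⟫ = ⟪ψ' x₁, x₂ - x₁⟫ + ⟪ψ' x₁, v⟫ := by
    have heq : u - x₁ = (x₂ - x₁) + v := by simp [hv]
    rw [heq, inner_add_right]
  have e3 : ⟪ψ' x₂, u - x₂⟫ = ⟪ψ' x₂, v⟫ := by rw [hv]
  rw [hD, hD, hD, e1, e2, e3]
  linarith [hkey]
end

section
/- In the setting of Algorithm 1 (Delayed FTRL for strongly convex functions): let λ > 0, x_1 ∈ X, and for t ≥ 2 let x_t minimize ∑_{τ∈o_t}⟨g_τ,x⟩ + (λ/2)∑_{s<t}‖x-x_s‖₂² over X, and let x_t^⋆ minimize ∑_{τ<t}⟨g_τ,x⟩ + (λ/2)∑_{s<t}‖x-x_s‖₂² over X (with x_1^⋆ = x_1). If ‖g_τ‖₂ ≤ G for all τ, then for every t ≥ 2, ‖x_t^⋆ - x_t‖₂ ≤ G|m_t|/(λ(t-1)), where m_t = [t-1] \ o_t. -/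
open RealInnerProductSpace

lemma norm_sub_sq_expand' {E : Type*} [NormedAddCommGroup E] [InnerProductSpace ℝ E]
    (x y a : E) :
    ‖y - a‖ ^ 2 = ‖x - a‖ ^ 2 + ‖y - x‖ ^ 2 + 2 * ⟪x - a, y - x⟫ := by
  have h : y - a = (y - x) + (x - a) := by abel
  rw [h, norm_add_sq_real, real_inner_comm]
  ring

lemma sum_norm_sub_sq_expand {E : Type*} [NormedAddCommGroup E] [InnerProductSpace ℝ E]
    (S : Finset ℕ) (xs : ℕ → E) (x y : E) :
    ∑ s ∈ S, ‖y - xs s‖ ^ 2 =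
      ∑ s ∈ S, ‖x - xs s‖ ^ 2 + (S.card : ℝ) * ‖y - x‖ ^ 2
        + 2 * ⟪∑ s ∈ S, (x - xs s), y - x⟫ := by
  rw [sum_inner]
  rw [Finset.sum_congr rfl fun s _ => norm_sub_sq_expand' x y (xs s)]
  rw [Finset.sum_add_distrib, Finset.sum_add_distrib, Finset.mul_sum, Finset.sum_const,
    nsmul_eq_mul]

lemma small_eps (A C : ℝ) (hC : 0 ≤ C) (h : ∀ θ : ℝ, 0 < θ → θ ≤ 1 → A * (1 - θ) ≤ C) :
    A ≤ C := by
  rcases le_or_gt A 0 with h0 | h0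
  · linarith
  · refine le_of_forall_pos_le_add fun ε hε => ?_
    have hθ1 : 0 < min 1 (ε / A) := lt_min one_pos (div_pos hε h0)
    have := h (min 1 (ε / A)) hθ1 (min_le_left _ _)
    have h2 : A * min 1 (ε / A) ≤ A * (ε / A) :=
      mul_le_mul_of_nonneg_left (min_le_right _ _) h0.le
    have h3 : A * (ε / A) = ε := by field_simp
    nlinarith

set_option maxHeartbeats 1000000 in
theorem stmt18 {n : ℕ} (X : Set (EuclideanSpace ℝ (Fin n)))
    (hXne : X.Nonempty) (hXc : IsClosed X) (hXconv : Convex ℝ X)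
    (lam G : ℝ) (hlam : 0 < lam)
    (g : ℕ → EuclideanSpace ℝ (Fin n)) (hG : ∀ τ, ‖g τ‖ ≤ G)
    (t : ℕ) (ht : 2 ≤ t)
    (ot : Finset ℕ) (hot : ot ⊆ Finset.Ico 1 t)
    (xs : ℕ → EuclideanSpace ℝ (Fin n))
    (xt xst : EuclideanSpace ℝ (Fin n))
    (hxtmem : xt ∈ X)
    (hxt : ∀ y ∈ X,
      (∑ τ ∈ ot, ⟪g τ, xt⟫) + lam / 2 * ∑ s ∈ Finset.Ico 1 t, ‖xt - xs s‖ ^ 2 ≤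
        (∑ τ ∈ ot, ⟪g τ, y⟫) + lam / 2 * ∑ s ∈ Finset.Ico 1 t, ‖y - xs s‖ ^ 2)
    (hxstmem : xst ∈ X)
    (hxst : ∀ y ∈ X,
      (∑ τ ∈ Finset.Ico 1 t, ⟪g τ, xst⟫)
          + lam / 2 * ∑ s ∈ Finset.Ico 1 t, ‖xst - xs s‖ ^ 2 ≤
        (∑ τ ∈ Finset.Ico 1 t, ⟪g τ, y⟫)
          + lam / 2 * ∑ s ∈ Finset.Ico 1 t, ‖y - xs s‖ ^ 2) :
    ‖xst - xt‖ ≤ G * ((Finset.Ico 1 t \ ot).card : ℝ) / (lam * ((t : ℝ) - 1)) := by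
  have hG0 : (0 : ℝ) ≤ G := le_trans (norm_nonneg _) (hG 0)
  set S := Finset.Ico 1 t with hS
  set d : EuclideanSpace ℝ (Fin n) := xst - xt with hd
  have h1t : 1 ≤ t := le_trans one_le_two ht
  have hcardS : (S.card : ℝ) = (t : ℝ) - 1 := by
    rw [hS, Nat.card_Ico, Nat.cast_sub h1t, Nat.cast_one]
  have htR : (2 : ℝ) ≤ (t : ℝ) := by exact_mod_cast ht
  have hk : (0 : ℝ) < lam * ((t : ℝ) - 1) := by nlinarith
  -- key combined inequality for each θ ∈ (0,1]
  have key : ∀ θ : ℝ, 0 < θ → θ ≤ 1 →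
      lam * ((t : ℝ) - 1) * ‖d‖ ^ 2 * (1 - θ) ≤ ⟪-(∑ τ ∈ S \ ot, g τ), d⟫ := by
    intro θ hθ0 hθ1
    -- points
    have hy1mem : xt + θ • d ∈ X := by
      have := hXconv hxtmem hxstmem (by linarith : (0:ℝ) ≤ 1 - θ) hθ0.le (by ring)
      convert this using 1
      rw [hd]
      module
    have hy2mem : xst - θ • d ∈ X := by
      have := hXconv hxstmem hxtmem (by linarith : (0:ℝ) ≤ 1 - θ) hθ0.le (by ring)
      convert this using 1
      rw [hd]
      module
    have H1 := hxt _ hy1mem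
    have H2 := hxst _ hy2mem
    -- expand quadratic parts
    have Q1 := sum_norm_sub_sq_expand S xs xt (xt + θ • d)
    have Q2 := sum_norm_sub_sq_expand S xs xst (xst - θ • d)
    have e1 : xt + θ • d - xt = θ • d := by abel
    have e2 : xst - θ • d - xst = -(θ • d) := by abel
    rw [e1] at Q1
    rw [e2] at Q2
    -- expand linear parts
    have L1 : ∑ τ ∈ ot, ⟪g τ, xt + θ • d⟫
        = ∑ τ ∈ ot, ⟪g τ, xt⟫ + θ * ⟪∑ τ ∈ ot, g τ, d⟫ := by
      rw [sum_inner, Finset.mul_sum, ← Finset.sum_add_distrib]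
      refine Finset.sum_congr rfl fun τ _ => ?_
      rw [inner_add_right, real_inner_smul_right]
    have L2 : ∑ τ ∈ S, ⟪g τ, xst - θ • d⟫
        = ∑ τ ∈ S, ⟪g τ, xst⟫ - θ * ⟪∑ τ ∈ S, g τ, d⟫ := by
      rw [sum_inner, Finset.mul_sum, ← Finset.sum_sub_distrib]
      refine Finset.sum_congr rfl fun τ _ => ?_
      rw [inner_sub_right, real_inner_smul_right]
    rw [L1, Q1] at H1
    rw [L2, Q2] at H2
    have hn1 : ‖θ • d‖ ^ 2 = θ ^ 2 * ‖d‖ ^ 2 := by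
      rw [norm_smul, Real.norm_eq_abs, abs_of_pos hθ0, mul_pow]
    have hn2 : ‖-(θ • d)‖ ^ 2 = θ ^ 2 * ‖d‖ ^ 2 := by rw [norm_neg]; exact hn1
    have hi1 : ⟪∑ s ∈ S, (xt - xs s), θ • d⟫ = θ * ⟪∑ s ∈ S, (xt - xs s), d⟫ :=
      real_inner_smul_right _ _ _
    have hi2 : ⟪∑ s ∈ S, (xst - xs s), -(θ • d)⟫
        = -(θ * ⟪∑ s ∈ S, (xst - xs s), d⟫) := by
      rw [inner_neg_right, real_inner_smul_right]
    rw [hn1, hi1] at H1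
    rw [hn2, hi2] at H2
    -- divide out θ
    have D1 : 0 ≤ ⟪∑ τ ∈ ot, g τ, d⟫ + lam * ⟪∑ s ∈ S, (xt - xs s), d⟫
        + lam * (S.card : ℝ) / 2 * θ * ‖d‖ ^ 2 := by
      have h' : 0 ≤ θ * (⟪∑ τ ∈ ot, g τ, d⟫ + lam * ⟪∑ s ∈ S, (xt - xs s), d⟫
          + lam * (S.card : ℝ) / 2 * θ * ‖d‖ ^ 2) := by nlinarith [H1]
      exact nonneg_of_mul_nonneg_right h' hθ0
    have D2 : 0 ≤ -⟪∑ τ ∈ S, g τ, d⟫ - lam * ⟪∑ s ∈ S, (xst - xs s), d⟫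
        + lam * (S.card : ℝ) / 2 * θ * ‖d‖ ^ 2 := by
      have h' : 0 ≤ θ * (-⟪∑ τ ∈ S, g τ, d⟫ - lam * ⟪∑ s ∈ S, (xst - xs s), d⟫
          + lam * (S.card : ℝ) / 2 * θ * ‖d‖ ^ 2) := by nlinarith [H2]
      exact nonneg_of_mul_nonneg_right h' hθ0
    -- difference of the regularizer gradients
    have hc : ⟪∑ s ∈ S, (xt - xs s), d⟫ - ⟪∑ s ∈ S, (xst - xs s), d⟫
        = -((S.card : ℝ) * ‖d‖ ^ 2) := by
      rw [← inner_sub_left, ← Finset.sum_sub_distrib]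
      have h1 : ∑ s ∈ S, (xt - xs s - (xst - xs s)) = (S.card : ℕ) • (-d) := by
        rw [Finset.sum_congr rfl fun s _ =>
          (by rw [hd]; abel : xt - xs s - (xst - xs s) = -d), Finset.sum_const]
      rw [h1, ← Nat.cast_smul_eq_nsmul ℝ, real_inner_smul_left, inner_neg_left,
        real_inner_self_eq_norm_sq]
      ring
    -- difference of the gradient sums
    have hw : ⟪∑ τ ∈ S, g τ, d⟫ - ⟪∑ τ ∈ ot, g τ, d⟫ = ⟪∑ τ ∈ S \ ot, g τ, d⟫ := by
      rw [← inner_sub_left]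
      congr 1
      rw [← Finset.sum_sdiff hot]
      abel
    rw [inner_neg_left]
    rw [hcardS] at D1 D2
    have hc' : lam * (⟪∑ s ∈ S, (xt - xs s), d⟫ - ⟪∑ s ∈ S, (xst - xs s), d⟫)
        = -(lam * ((t : ℝ) - 1) * ‖d‖ ^ 2) := by rw [hc, hcardS]; ring
    linarith [D1, D2, hw, hc']
  -- bound the missing-gradient sum
  have hwnorm : ‖∑ τ ∈ S \ ot, g τ‖ ≤ G * ((S \ ot).card : ℝ) := by
    calc ‖∑ τ ∈ S \ ot, g τ‖ ≤ ∑ τ ∈ S \ ot, ‖g τ‖ := norm_sum_le _ _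
    _ ≤ ∑ τ ∈ S \ ot, G := Finset.sum_le_sum fun τ _ => hG τ
    _ = G * ((S \ ot).card : ℝ) := by rw [Finset.sum_const, nsmul_eq_mul]; ring
  have hC : ⟪-(∑ τ ∈ S \ ot, g τ), d⟫ ≤ G * ((S \ ot).card : ℝ) * ‖d‖ := by
    calc ⟪-(∑ τ ∈ S \ ot, g τ), d⟫ ≤ ‖-(∑ τ ∈ S \ ot, g τ)‖ * ‖d‖ := real_inner_le_norm _ _
    _ = ‖∑ τ ∈ S \ ot, g τ‖ * ‖d‖ := by rw [norm_neg]
    _ ≤ G * ((S \ ot).card : ℝ) * ‖d‖ :=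
        mul_le_mul_of_nonneg_right hwnorm (norm_nonneg _)
  have hCnn : (0 : ℝ) ≤ G * ((S \ ot).card : ℝ) * ‖d‖ := by positivity
  have main : lam * ((t : ℝ) - 1) * ‖d‖ ^ 2 ≤ G * ((S \ ot).card : ℝ) * ‖d‖ :=
    small_eps _ _ hCnn fun θ hθ0 hθ1 => le_trans (key θ hθ0 hθ1) hC
  rcases eq_or_lt_of_le (norm_nonneg d) with h0 | h0
  · rw [← h0]
    positivity
  · show ‖d‖ ≤ _
    rw [le_div_iff₀ hk]
    nlinarith [main, h0]
end
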